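/- Let f: [0,∞) → [0,∞) be continuous and satisfy f(t) ≤ f(0)·exp(−(C/2)∫₀ᵗ (1 + ∫₀^τ f(s)ds)^{-1} dτ) for all t ≥ 0, where C > 0. Then ∫₀^∞ f(s) ds < ∞, and moreover there exist constants A, c > 0 such that f(t) ≤ A e^{-ct} for all t ≥ 0. -/

import Mathlib

open MeasureTheory intervalIntegral

/- STATEMENT 4: The ODE comparison argument confining the flow: if a
continuous nonnegative `f` on `[0,∞)` satisfies
`f(t) ≤ f(0)·exp(−(C/2)·∫₀ᵗ (1 + ∫₀^τ f(s) ds)⁻¹ dτ)` for all `t ≥ 0` with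
`C > 0`, then `∫₀^∞ f < ∞` and `f` decays exponentially. -/
theorem integral_inequality_exponential_decay
    (f : ℝ → ℝ) (C : ℝ) (hC : 0 < C)
    (hcont : ContinuousOn f (Set.Ici 0))
    (hnn : ∀ t : ℝ, 0 ≤ t → 0 ≤ f t)
    (hineq : ∀ t : ℝ, 0 ≤ t →
      f t ≤ f 0 * Real.exp (-(C/2) *
        ∫ τ in (0:ℝ)..t, (1 + ∫ s in (0:ℝ)..τ, f s)⁻¹)) :
    IntegrableOn f (Set.Ici 0) ∧
    ∃ A c : ℝ, 0 < A ∧ 0 < c ∧ ∀ t : ℝ, 0 ≤ t → f t ≤ A * Real.exp (-c * t) := by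
  -- notation
  set F : ℝ → ℝ := fun t => ∫ s in (0:ℝ)..t, f s with hFdef
  set g : ℝ → ℝ := fun τ => (1 + F τ)⁻¹ with hgdef
  set G : ℝ → ℝ := fun t => ∫ τ in (0:ℝ)..t, g τ with hGdef
  -- basic facts
  have hsub : ∀ t : ℝ, 0 ≤ t → Set.uIcc (0:ℝ) t ⊆ Set.Ici 0 := by
    intro t ht
    rw [Set.uIcc_of_le ht]
    exact fun x hx => hx.1
  have hfint : ∀ t : ℝ, 0 ≤ t → IntervalIntegrable f MeasureTheory.volume 0 t :=
    fun t ht => (hcont.mono (hsub t ht)).intervalIntegrable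
  have hFnn : ∀ t : ℝ, 0 ≤ t → 0 ≤ F t := by
    intro t ht
    exact intervalIntegral.integral_nonneg ht (fun x hx => hnn x hx.1)
  have hFpos : ∀ t : ℝ, 0 ≤ t → 0 < 1 + F t := by
    intro t ht; linarith [hFnn t ht]
  -- continuity of F on Ici 0
  have hFcont : ContinuousOn F (Set.Ici 0) := by
    intro t ht
    have h1 : ContinuousWithinAt F (Set.Icc 0 (t+1)) t := by
      apply intervalIntegral.continuousWithinAt_primitive (measure_singleton t)
      rw [min_self]
      have : (0:ℝ) ≤ max 0 (t+1) := le_max_left _ _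
      exact hfint _ this
    apply h1.mono_of_mem_nhdsWithin
    have : Set.Icc (0:ℝ) (t+1) = Set.Ici 0 ∩ Set.Iic (t+1) := (Set.Ici_inter_Iic).symm
    rw [this]
    exact Filter.inter_mem self_mem_nhdsWithin
      (nhdsWithin_le_nhds (Iic_mem_nhds (by linarith [ht.out])))
  have hgcont : ContinuousOn g (Set.Ici 0) := by
    apply ContinuousOn.inv₀ (continuousOn_const.add hFcont)
    intro x hx; exact ne_of_gt (hFpos x hx)
  have hgint : ∀ t : ℝ, 0 ≤ t → IntervalIntegrable g MeasureTheory.volume 0 t :=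
    fun t ht => (hgcont.mono (hsub t ht)).intervalIntegrable
  -- derivatives on Ioi 0
  have hFd : ∀ t : ℝ, 0 < t → HasDerivAt F (f t) t := by
    intro t ht
    have hca : ContinuousAt f t := (hcont t (le_of_lt ht)).continuousAt (Ici_mem_nhds ht)
    exact intervalIntegral.integral_hasDerivAt_right (hfint t ht.le)
      (ContinuousOn.stronglyMeasurableAtFilter isOpen_Ioi
        (hcont.mono Set.Ioi_subset_Ici_self) t ht) hca
  have hGd : ∀ t : ℝ, 0 < t → HasDerivAt G (g t) t := by
    intro t ht
    have hca : ContinuousAt g t := (hgcont t (le_of_lt ht)).continuousAt (Ici_mem_nhds ht)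
    exact intervalIntegral.integral_hasDerivAt_right (hgint t ht.le)
      (ContinuousOn.stronglyMeasurableAtFilter isOpen_Ioi
        (hgcont.mono Set.Ioi_subset_Ici_self) t ht) hca
  -- case f 0 = 0
  by_cases h0 : f 0 = 0
  · have hfz : ∀ t : ℝ, 0 ≤ t → f t = 0 := by
      intro t ht
      have := hineq t ht
      rw [h0, zero_mul] at this
      exact le_antisymm this (hnn t ht)
    constructor
    · exact MeasureTheory.integrableOn_zero.congr_fun
        (fun x hx => (hfz x hx).symm) measurableSet_Ici
    · refine ⟨1, 1, one_pos, one_pos, fun t ht => ?_⟩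
      rw [hfz t ht, one_mul]
      positivity
  · have hf0 : 0 < f 0 := lt_of_le_of_ne (hnn 0 le_rfl) (Ne.symm h0)
    set B : ℝ := Real.exp (2 * f 0 / C) with hBdef
    have hB1 : 1 ≤ B := Real.one_le_exp (by positivity)
    have hBpos : 0 < B := lt_of_lt_of_le one_pos hB1
    -- the Lyapunov function
    set Φ : ℝ → ℝ := fun t => Real.log (1 + F t)
      + (2 * f 0 / C) * Real.exp (-(C/2) * G t) with hΦdef
    have hΦd : ∀ t : ℝ, 0 < t → HasDerivAt Φ
        ((f t - f 0 * Real.exp (-(C/2) * G t)) * (1 + F t)⁻¹) t := by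
      intro t ht
      have h1 : HasDerivAt (fun t => Real.log (1 + F t)) ((0 + f t) / (1 + F t)) t :=
        HasDerivAt.log ((hasDerivAt_const t (1:ℝ)).add (hFd t ht))
          (ne_of_gt (hFpos t ht.le))
      have h2 : HasDerivAt (fun t => -(C/2) * G t) (-(C/2) * g t) t :=
        (hGd t ht).const_mul _
      have h3 : HasDerivAt (fun t => (2 * f 0 / C) * Real.exp (-(C/2) * G t))
          ((2 * f 0 / C) * (Real.exp (-(C/2) * G t) * (-(C/2) * g t))) t :=
        (h2.exp).const_mul _
      have := h1.add h3
      refine this.congr_deriv ?_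
      have hC' : C ≠ 0 := ne_of_gt hC
      simp only [hgdef]
      field_simp [ne_of_gt (hFpos t ht.le)]
      ring
    have hΦanti : AntitoneOn Φ (Set.Ici 0) := by
      apply antitoneOn_of_deriv_nonpos (convex_Ici 0)
      · apply ContinuousOn.add
        · exact ContinuousOn.log (continuousOn_const.add hFcont)
            (fun x hx => ne_of_gt (hFpos x hx))
        · apply continuousOn_const.mul
          apply Real.continuous_exp.comp_continuousOn
          exact continuousOn_const.mul
            (fun t ht => (intervalIntegral.continuousWithinAt_primitive
                (measure_singleton t) (by
                  rw [min_self]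
                  exact hgint _ (le_max_left 0 (t+1)))).mono_of_mem_nhdsWithin (by
                  rw [show Set.Icc (0:ℝ) (t+1) = Set.Ici 0 ∩ Set.Iic (t+1)
                      from (Set.Ici_inter_Iic).symm]
                  exact Filter.inter_mem self_mem_nhdsWithin
                    (nhdsWithin_le_nhds (Iic_mem_nhds (by linarith [ht.out])))))
      · intro x hx
        rw [interior_Ici] at hx
        exact (hΦd x hx).differentiableAt.differentiableWithinAt
      · intro x hx
        rw [interior_Ici] at hx
        rw [(hΦd x hx).deriv]
        apply mul_nonpos_of_nonpos_of_nonneg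
        · have := hineq x hx.le
          linarith
        · exact le_of_lt (inv_pos.mpr (hFpos x hx.le))
    -- bound on 1 + F
    have hFbound : ∀ t : ℝ, 0 ≤ t → 1 + F t ≤ B := by
      intro t ht
      have h1 : Φ t ≤ Φ 0 := hΦanti Set.self_mem_Ici ht ht
      have hF0 : F 0 = 0 := intervalIntegral.integral_same
      have hG0 : G 0 = 0 := intervalIntegral.integral_same
      have hΦ0 : Φ 0 = 2 * f 0 / C := by
        simp [hΦdef, hF0, hG0]
      have hexp : 0 ≤ (2 * f 0 / C) * Real.exp (-(C/2) * G t) := by positivity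
      have hlog : Real.log (1 + F t) ≤ 2 * f 0 / C := by
        rw [hΦ0] at h1
        have h2 : Real.log (1 + F t)
            + (2 * f 0 / C) * Real.exp (-(C/2) * G t) ≤ 2 * f 0 / C := h1
        linarith
      rwa [Real.log_le_iff_le_exp (hFpos t ht), ← hBdef] at hlog
    -- lower bound on G
    have hGlb : ∀ t : ℝ, 0 ≤ t → t / B ≤ G t := by
      intro t ht
      have h1 : ∫ τ in (0:ℝ)..t, B⁻¹ ≤ G t := by
        apply intervalIntegral.integral_mono_on ht
          intervalIntegrable_const (hgint t ht)
        intro x hx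
        exact inv_anti₀ (hFpos x hx.1) (hFbound x hx.1)
      rw [intervalIntegral.integral_const, smul_eq_mul, sub_zero] at h1
      rw [div_eq_mul_inv]
      exact h1
    -- conclusion
    have hc : 0 < C / (2 * B) := by positivity
    have hfinal : ∀ t : ℝ, 0 ≤ t → f t ≤ f 0 * Real.exp (-(C / (2 * B)) * t) := by
      intro t ht
      refine le_trans (hineq t ht) ?_
      apply mul_le_mul_of_nonneg_left _ hf0.le
      apply Real.exp_le_exp.mpr
      have := hGlb t ht
      have h2 : -(C/2) * G t ≤ -(C/2) * (t / B) := by nlinarith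
      refine le_trans h2 (le_of_eq ?_)
      field_simp
    constructor
    · have hint : IntegrableOn (fun t => f 0 * Real.exp (-(C / (2 * B)) * t))
          (Set.Ici 0) := by
        rw [integrableOn_Ici_iff_integrableOn_Ioi]
        exact (exp_neg_integrableOn_Ioi 0 hc).const_mul _
      apply hint.integrable.mono (hcont.aestronglyMeasurable measurableSet_Ici)
      rw [MeasureTheory.ae_restrict_iff' measurableSet_Ici]
      filter_upwards with x
      intro hx
      rw [Real.norm_eq_abs, Real.norm_eq_abs, abs_of_nonneg (hnn x hx),
        abs_of_nonneg (by positivity)]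
      exact hfinal x hx
    · exact ⟨f 0, C / (2 * B), hf0, hc, hfinal⟩
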